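/- Let Ĥ be a nonnegative selfadjoint bounded linear operator on a complex Hilbert space with ‖Ĥ‖ ≤ B for some B > 0, let λ > 0, let t ≥ 1 be a natural number and r > 0 a real number, and let Ĥ^r denote the fractional power defined via the continuous functional calculus. Then Ĥ + λI is invertible and: if r < t, ‖λ^t · ((Ĥ + λI)^{-1})^t · Ĥ^r‖ ≤ (r·λ/t)^r; and if r ≥ t, ‖λ^t · ((Ĥ + λI)^{-1})^t · Ĥ^r‖ ≤ (λ/(B+λ))^t · B^r. -/

import Mathlib

set_option maxHeartbeats 2000000

open scoped NNReal

private lemma it_key1 {x lam r : ℝ} {t : ℕ} (hx : 0 ≤ x) (hl : 0 < lam) (hr : 0 < r)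
    (hrt : r < t) : lam ^ t * x ^ r ≤ (r * lam / t) ^ r * (x + lam) ^ t := by
  have ht0 : (0:ℝ) < t := hr.trans hrt
  have h1 : 1 ≤ (t:ℝ) / r := (one_le_div hr).mpr hrt.le
  have hxl : (0:ℝ) ≤ x / lam := div_nonneg hx hl.le
  have hb : ((t:ℝ)/r) * (x/lam) ≤ (1 + x/lam) ^ ((t:ℝ)/r) :=
    le_trans (le_add_of_nonneg_left zero_le_one)
      (one_add_mul_self_le_rpow_one_add (by linarith) h1)
  have hb2 : (((t:ℝ)/r) * (x/lam)) ^ r ≤ (1 + x/lam) ^ (t:ℝ) := by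
    calc (((t:ℝ)/r) * (x/lam)) ^ r ≤ ((1 + x/lam) ^ ((t:ℝ)/r)) ^ r :=
          Real.rpow_le_rpow (by positivity) hb hr.le
      _ = (1 + x/lam) ^ (t:ℝ) := by
          rw [← Real.rpow_mul (by positivity), div_mul_cancel₀ _ hr.ne']
  have hxr : x ^ r = (r * lam / t) ^ r * (((t:ℝ)/r) * (x/lam)) ^ r := by
    rw [← Real.mul_rpow (by positivity) (by positivity)]
    congr 1
    field_simp
  calc lam ^ t * x ^ r
      = (r * lam / t) ^ r * (lam ^ t * (((t:ℝ)/r) * (x/lam)) ^ r) := by rw [hxr]; ring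
    _ ≤ (r * lam / t) ^ r * (lam ^ t * (1 + x/lam) ^ (t:ℝ)) := by
        gcongr
    _ = (r * lam / t) ^ r * (x + lam) ^ t := by
        rw [Real.rpow_natCast, ← mul_pow]
        congr 2
        field_simp
        ring

private lemma it_key2 {x B lam r : ℝ} {t : ℕ} (hx : 0 ≤ x) (hxB : x ≤ B) (hB : 0 < B)
    (hl : 0 < lam) (hr : 0 < r) (htr : (t:ℝ) ≤ r) :
    x ^ r * (B + lam) ^ t ≤ B ^ r * (x + lam) ^ t := by
  rcases eq_or_lt_of_le hx with h0 | hx0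
  · rw [← h0, Real.zero_rpow hr.ne', zero_mul]
    positivity
  have hxr : x ^ r = x ^ (r - t) * x ^ (t:ℝ) := by
    rw [← Real.rpow_add hx0]; ring_nf
  have hBr : B ^ (r - t) * B ^ (t:ℝ) = B ^ r := by
    rw [← Real.rpow_add hB]; ring_nf
  calc x ^ r * (B + lam) ^ t = x ^ (r - t) * (x ^ (t:ℝ) * (B + lam) ^ t) := by
        rw [hxr]; ring
    _ = x ^ (r - t) * (x * (B + lam)) ^ t := by
        rw [Real.rpow_natCast, mul_pow]
    _ ≤ B ^ (r - t) * (B * (x + lam)) ^ t :=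
        mul_le_mul (Real.rpow_le_rpow hx hxB (by linarith))
          (pow_le_pow_left₀ (by positivity) (by nlinarith) t)
          (by positivity) (by positivity)
    _ = B ^ r * (x + lam) ^ t := by
        rw [mul_pow, ← Real.rpow_natCast B t, ← mul_assoc, hBr]

/-- **Operator-norm bound on the iterated Tikhonov residual under a source condition**
(spectral-calculus form of the paper's calculus Lemma): for a nonnegative selfadjoint
bounded operator `Ĥ` with `‖Ĥ‖ ≤ B`, `λ > 0`, `t ≥ 1` and `r > 0`, the operator `Ĥ + λI`
is invertible and `‖λ^t·((Ĥ + λI)⁻¹)^t·Ĥ^r‖ ≤ (r·λ/t)^r` if `r < t`, while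
`‖λ^t·((Ĥ + λI)⁻¹)^t·Ĥ^r‖ ≤ (λ/(B+λ))^t·B^r` if `r ≥ t`. -/
theorem it_residual_operator_norm_bound
    {H : Type*} [NormedAddCommGroup H] [InnerProductSpace ℂ H] [CompleteSpace H]
    (Hop : H →L[ℂ] H) (hsa : IsSelfAdjoint Hop) (h0 : 0 ≤ Hop)
    (B : ℝ) (hB : 0 < B) (hnorm : ‖Hop‖ ≤ B)
    (lam : ℝ) (hlam : 0 < lam) (t : ℕ) (ht : 1 ≤ t) (r : ℝ) (hr : 0 < r) :
    IsUnit (Hop + (lam : ℂ) • (1 : H →L[ℂ] H)) ∧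
      (r < t →
        ‖lam ^ t • ((Ring.inverse (Hop + (lam : ℂ) • (1 : H →L[ℂ] H))) ^ t
            * CFC.rpow Hop r)‖ ≤ (r * lam / t) ^ r) ∧
      ((t : ℝ) ≤ r →
        ‖lam ^ t • ((Ring.inverse (Hop + (lam : ℂ) • (1 : H →L[ℂ] H))) ^ t
            * CFC.rpow Hop r)‖ ≤ (lam / (B + lam)) ^ t * B ^ r) := by
  rcases subsingleton_or_nontrivial H with hH | hH
  · have : Subsingleton (H →L[ℂ] H) := ⟨fun f g => by ext x; exact Subsingleton.elim _ _⟩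
    refine ⟨isUnit_of_subsingleton _, fun hrt => ?_, fun htr => ?_⟩
    · rw [Subsingleton.elim (lam ^ t • ((Ring.inverse (Hop + (lam : ℂ) • (1 : H →L[ℂ] H))) ^ t
            * CFC.rpow Hop r)) (0 : H →L[ℂ] H), norm_zero]
      have : (0:ℝ) < t := hr.trans hrt
      positivity
    · rw [Subsingleton.elim (lam ^ t • ((Ring.inverse (Hop + (lam : ℂ) • (1 : H →L[ℂ] H))) ^ t
            * CFC.rpow Hop r)) (0 : H →L[ℂ] H), norm_zero]
      positivity
  set l : ℝ≥0 := ⟨lam, hlam.le⟩ with hl_def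
  have hl : 0 < l := by
    rw [← NNReal.coe_lt_coe]
    exact hlam
  have hlcoe : (l : ℝ) = lam := rfl
  -- the algebra map fact
  have halg : (algebraMap ℝ≥0 (H →L[ℂ] H)) l = (lam : ℂ) • (1 : H →L[ℂ] H) := by
    rw [Algebra.algebraMap_eq_smul_one, NNReal.smul_def, hlcoe]
    ext v
    simp only [ContinuousLinearMap.smul_apply]
    rw [← smul_one_smul ℂ lam ((1 : H →L[ℂ] H) v)]
    norm_num
  set g : ℝ≥0 → ℝ≥0 := fun x => (x + l)⁻¹ with hg_def
  have hgc : Continuous g := by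
    refine (continuous_id.add continuous_const).inv₀ fun x => ?_
    exact (add_pos_of_nonneg_of_pos (show (0:ℝ≥0) ≤ x from x.2) hl).ne'
  have hE1 : Hop + (lam : ℂ) • (1 : H →L[ℂ] H) = cfc (fun x : ℝ≥0 => x + l) Hop := by
    rw [show (fun x : ℝ≥0 => x + l) = (fun x : ℝ≥0 => id x + l) from rfl,
      cfc_add_const l id Hop continuousOn_id h0, cfc_id ℝ≥0 Hop, halg]
  have h1 : (Hop + (lam : ℂ) • (1 : H →L[ℂ] H)) * cfc g Hop = 1 := by
    rw [hE1, ← cfc_mul _ _ Hop (by fun_prop) hgc.continuousOn]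
    calc cfc (fun x : ℝ≥0 => (x + l) * g x) Hop = cfc (1 : ℝ≥0 → ℝ≥0) Hop :=
          cfc_congr fun x _ => mul_inv_cancel₀ (by positivity)
      _ = 1 := cfc_one ℝ≥0 Hop
  have h2 : cfc g Hop * (Hop + (lam : ℂ) • (1 : H →L[ℂ] H)) = 1 := by
    rw [hE1, ← cfc_mul _ _ Hop hgc.continuousOn (by fun_prop)]
    calc cfc (fun x : ℝ≥0 => g x * (x + l)) Hop = cfc (1 : ℝ≥0 → ℝ≥0) Hop :=
          cfc_congr fun x _ => inv_mul_cancel₀ (by positivity)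
      _ = 1 := cfc_one ℝ≥0 Hop
  have hU : IsUnit (Hop + (lam : ℂ) • (1 : H →L[ℂ] H)) :=
    ⟨⟨_, cfc g Hop, h1, h2⟩, rfl⟩
  have hinv : Ring.inverse (Hop + (lam : ℂ) • (1 : H →L[ℂ] H)) = cfc g Hop :=
    Ring.inverse_unit ⟨_, cfc g Hop, h1, h2⟩
  -- rewrite the main expression as a single cfc
  set F : ℝ≥0 → ℝ≥0 := fun x => l ^ t * ((g x) ^ t * x ^ r) with hF_def
  have hFc : ContinuousOn F (spectrum ℝ≥0 Hop) := by
    apply Continuous.continuousOn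
    exact continuous_const.mul ((hgc.pow t).mul (NNReal.continuous_rpow_const hr.le))
  have hE : lam ^ t • ((Ring.inverse (Hop + (lam : ℂ) • (1 : H →L[ℂ] H))) ^ t
      * CFC.rpow Hop r) = cfc F Hop := by
    rw [hinv]
    have hpow : (cfc g Hop) ^ t = cfc (fun x => (g x) ^ t) Hop :=
      (cfc_pow g t Hop hgc.continuousOn h0).symm
    have hprod : (cfc g Hop) ^ t * CFC.rpow Hop r
        = cfc (fun x : ℝ≥0 => (g x) ^ t * x ^ r) Hop := by
      rw [hpow, CFC.rpow]
      exact (cfc_mul _ _ Hop (hgc.pow t).continuousOn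
        (NNReal.continuous_rpow_const hr.le).continuousOn).symm
    rw [hprod, hF_def]
    have hsmul : (fun x : ℝ≥0 => l ^ t * ((g x) ^ t * x ^ r))
        = fun x : ℝ≥0 => l ^ t • ((g x) ^ t * x ^ r) := rfl
    rw [hsmul, cfc_smul (l ^ t) (fun x : ℝ≥0 => (g x) ^ t * x ^ r) Hop ((hgc.pow t).mul
      (NNReal.continuous_rpow_const hr.le)).continuousOn]
    congr 1
  -- generic norm bound
  have main : ∀ c : ℝ, 0 ≤ c → (∀ x ∈ spectrum ℝ≥0 Hop, F x ≤ Real.toNNReal c) →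
      ‖lam ^ t • ((Ring.inverse (Hop + (lam : ℂ) • (1 : H →L[ℂ] H))) ^ t
        * CFC.rpow Hop r)‖ ≤ c := by
    intro c hc hbound
    rw [hE]
    calc ‖cfc F Hop‖ = ((‖cfc F Hop‖₊ : ℝ≥0) : ℝ) := rfl
      _ ≤ ((Real.toNNReal c : ℝ≥0) : ℝ) := by
          exact_mod_cast nnnorm_cfc_nnreal_le hbound
      _ = c := Real.coe_toNNReal c hc
  -- spectrum bound
  have hspec : ∀ x ∈ spectrum ℝ≥0 Hop, (x : ℝ) ≤ B := fun x hx =>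
    le_trans (spectrum.coe_le_norm_of_mem hx) hnorm
  refine ⟨hU, fun hrt => ?_, fun htr => ?_⟩
  · -- case r < t
    have ht0 : (0:ℝ) < t := hr.trans hrt
    refine main _ (by positivity) fun x hx => ?_
    rw [← NNReal.coe_le_coe, Real.coe_toNNReal _ (by positivity)]
    have hxl : (0:ℝ) < (x:ℝ) + lam := by positivity
    have key := it_key1 (x := (x:ℝ)) x.coe_nonneg hlam hr hrt
    have hlhs : ((F x : ℝ≥0) : ℝ) = lam ^ t * (x:ℝ) ^ r / ((x:ℝ) + lam) ^ t := by
      rw [hF_def]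
      push_cast [NNReal.coe_rpow]
      rw [hlcoe, hg_def]
      push_cast [hlcoe]
      field_simp
      rw [div_pow, one_pow, div_mul_eq_mul_div, one_mul, div_mul_cancel₀ _ (by positivity)]
    rw [hlhs, div_le_iff₀ (by positivity)]
    exact key
  · -- case t ≤ r
    refine main _ (by positivity) fun x hx => ?_
    rw [← NNReal.coe_le_coe, Real.coe_toNNReal _ (by positivity)]
    have hxl : (0:ℝ) < (x:ℝ) + lam := by positivity
    have key := it_key2 (x := (x:ℝ)) x.coe_nonneg (hspec x hx) hB hlam hr htr
    have hlhs : ((F x : ℝ≥0) : ℝ) = lam ^ t * (x:ℝ) ^ r / ((x:ℝ) + lam) ^ t := by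
      rw [hF_def]
      push_cast [NNReal.coe_rpow]
      rw [hlcoe, hg_def]
      push_cast [hlcoe]
      field_simp
      rw [div_pow, one_pow, div_mul_eq_mul_div, one_mul, div_mul_cancel₀ _ (by positivity)]
    rw [hlhs, div_le_iff₀ (by positivity)]
    have hBl : (0:ℝ) < B + lam := by positivity
    calc lam ^ t * (x:ℝ) ^ r = lam ^ t * ((x:ℝ) ^ r * (B + lam) ^ t) / (B + lam) ^ t := by
          field_simp
      _ ≤ lam ^ t * (B ^ r * ((x:ℝ) + lam) ^ t) / (B + lam) ^ t := by
          gcongr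
      _ = (lam / (B + lam)) ^ t * B ^ r * ((x:ℝ) + lam) ^ t := by
          rw [div_pow]
          field_simp
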